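/- Let φ = C₁ ∧ … ∧ C_m be a 3-CNF formula over variables x₁, …, x_n and let TA_φ be its associated threshold automaton. Then φ is satisfiable if and only if there exist an initial configuration σ₀ of TA_φ and a schedule τ applicable to σ₀ such that τ(σ₀).κ(ℓ_F) > 0. -/

import Mathlib

/-!
Threshold automata (Konnov, Veith, Widder), following
"Complexity of Verification and Synthesis of Threshold Automata".
-/

/-- A threshold guard `x ⋈ a₀ + a₁·p₁ + … + a_{|Π|}·p_{|Π|}` over shared variables `V` and
parameters `P`.  `isRise = true` means a *rise* guard `x ≥ …`, and `isRise = false` means a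
*fall* guard `x < …`. -/
structure TGuard (V P : Type) where
  var : V
  isRise : Bool
  a0 : ℚ
  coef : P → ℚ

/-- A configuration `σ = (κ, g, p)`: numbers of processes in each location, values of the
shared variables, and values of the parameters. -/
structure Config (L V P : Type) where
  κ : L → ℕ
  g : V → ℕ
  p : P → ℕ

/-- A rule of a threshold automaton: source and target locations, a guard that is a
(finite) conjunction of threshold guards, and an update `V → {0,1}`. -/
structure TRule (L V P : Type) where
  src : L
  dst : L
  guard : List (TGuard V P)
  upd : V → ℕ
  upd_le_one : ∀ v, upd v ≤ 1

/-- A threshold automaton `(L, I, Γ, R)` together with its environment `(Π, RC, N)`.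
`L`, `V`, `P` are the types of locations, shared variables and parameters, and `R` is the
index type of rules. -/
structure TA (L V P R : Type) where
  initial : Set L
  initial_nonempty : initial.Nonempty
  rc : Set (P → ℕ)
  N : (P → ℕ) → ℕ
  rule : R → TRule L V P

variable {L V P R : Type}

/-- Satisfaction of a threshold guard by values `g` of the shared variables and `p` of the
parameters. -/
def TGuard.holds [Fintype P] (φ : TGuard V P) (g : V → ℕ) (p : P → ℕ) : Prop :=
  if φ.isRise then φ.a0 + ∑ i : P, φ.coef i * (p i : ℚ) ≤ (g φ.var : ℚ)
  else (g φ.var : ℚ) < φ.a0 + ∑ i : P, φ.coef i * (p i : ℚ)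

/-- A configuration enables a rule. -/
def TRule.enabledAt [Fintype P] (r : TRule L V P) (σ : Config L V P) : Prop :=
  0 < σ.κ r.src ∧ ∀ φ ∈ r.guard, φ.holds σ.g σ.p

/-- The result of firing a rule at a configuration. -/
def TRule.fire [DecidableEq L] (r : TRule L V P) (σ : Config L V P) : Config L V P where
  κ := fun ℓ => σ.κ ℓ + (if ℓ = r.dst then 1 else 0) - (if ℓ = r.src then 1 else 0)
  g := fun v => σ.g v + r.upd v
  p := σ.p

namespace TA

variable [Fintype P] [DecidableEq L]

/-- `σ` is a configuration of `ta`: the parameters satisfy the resilience condition and the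
total number of processes is `N(p)`. -/
def validConfig [Fintype L] (ta : TA L V P R) (σ : Config L V P) : Prop :=
  σ.p ∈ ta.rc ∧ ∑ ℓ : L, σ.κ ℓ = ta.N σ.p

/-- Initial configurations. -/
def isInitial [Fintype L] (ta : TA L V P R) (σ : Config L V P) : Prop :=
  ta.validConfig σ ∧ (∀ ℓ, ℓ ∉ ta.initial → σ.κ ℓ = 0) ∧ ∀ v, σ.g v = 0

/-- A schedule (finite sequence of rules) is applicable to a configuration. -/
def applicable (ta : TA L V P R) : Config L V P → List R → Prop
  | _, [] => True
  | σ, r :: τ => (ta.rule r).enabledAt σ ∧ ta.applicable ((ta.rule r).fire σ) τ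

/-- The configuration `τ(σ)` resulting from applying a schedule. -/
def apply (ta : TA L V P R) : Config L V P → List R → Config L V P
  | σ, [] => σ
  | σ, r :: τ => ta.apply ((ta.rule r).fire σ) τ

/-- The configurations visited by the path from `σ` along `τ` (including both endpoints). -/
def visited (ta : TA L V P R) : Config L V P → List R → List (Config L V P)
  | σ, [] => [σ]
  | σ, r :: τ => σ :: ta.visited ((ta.rule r).fire σ) τ

/-- Reachability `σ →* σ'`. -/
def reaches (ta : TA L V P R) (σ σ' : Config L V P) : Prop :=
  ∃ τ : List R, ta.applicable σ τ ∧ ta.apply σ τ = σ'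

/-- The set of all threshold guards occurring in rules of the automaton. -/
def guards (ta : TA L V P R) : Set (TGuard V P) :=
  {φ | ∃ r : R, φ ∈ (ta.rule r).guard}

/-- The context `ω(σ)`: rise guards of `ta` that are true in `σ` together with fall guards
of `ta` that are false in `σ`. -/
def context (ta : TA L V P R) (σ : Config L V P) : Set (TGuard V P) :=
  {φ | φ ∈ ta.guards ∧ if φ.isRise then φ.holds σ.g σ.p else ¬ φ.holds σ.g σ.p}

/-- A schedule applicable at `σ` is steady if all configurations visited by the
corresponding path have the same context. -/
def steady (ta : TA L V P R) (σ : Config L V P) (τ : List R) : Prop :=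
  ∀ σ' ∈ ta.visited σ τ, ta.context σ' = ta.context σ

end TA

/-! ### The threshold automaton `TA_φ` associated with a 3-CNF formula `φ`

A 3-CNF formula over variables `x₁, …, x_n` with clauses `C₁, …, C_m` is given by a
function `C : Fin m → Fin 3 → Fin n × Bool`, where `C j t = (i, b)` means that the `t`-th
literal of clause `j` is `x_i` (if `b = true`) or `¬x_i` (if `b = false`). -/

/-- Locations: `ℓ_i`, `⊤_i`, `⊥_i` (for `1 ≤ i ≤ n`), `ℓ_mid` and `ℓ_F`. -/
abbrev SatLoc (n : ℕ) := Fin n ⊕ Fin n ⊕ Fin n ⊕ Fin 2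

def satStart {n : ℕ} (i : Fin n) : SatLoc n := Sum.inl i
def satTop {n : ℕ} (i : Fin n) : SatLoc n := Sum.inr (Sum.inl i)
def satBot {n : ℕ} (i : Fin n) : SatLoc n := Sum.inr (Sum.inr (Sum.inl i))
def satMid {n : ℕ} : SatLoc n := Sum.inr (Sum.inr (Sum.inr 0))
def satFin {n : ℕ} : SatLoc n := Sum.inr (Sum.inr (Sum.inr 1))

/-- Rules: `(ℓ_i → ⊤_i)`, `(ℓ_i → ⊥_i)`, `(⊤_i → ℓ_mid)`, `(⊥_i → ℓ_mid)` and the final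
rule `(ℓ_mid → ℓ_F)`. -/
abbrev SatRule (n : ℕ) := Fin n ⊕ Fin n ⊕ Fin n ⊕ Fin n ⊕ Unit

/-- A guard with constant threshold `x ⋈ a` (all parameter coefficients are `0`). -/
def constGuard {V P : Type} (isRise : Bool) (x : V) (a : ℚ) : TGuard V P :=
  ⟨x, isRise, a, fun _ => 0⟩

/-- The update incrementing exactly the shared variable `x`. -/
def unitUpd {V : Type} [DecidableEq V] (x : V) : V → ℕ := fun v => if v = x then 1 else 0

theorem unitUpd_le_one {V : Type} [DecidableEq V] (x v : V) : unitUpd x v ≤ 1 := by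
  unfold unitUpd; split <;> omega

/-- Satisfiability of the 3-CNF formula given by `C`. -/
def cnfSatisfiable {n m : ℕ} (C : Fin m → Fin 3 → Fin n × Bool) : Prop :=
  ∃ v : Fin n → Bool, ∀ j : Fin m, ∃ t : Fin 3, v (C j t).1 = (C j t).2

/-- Shared variables: `y_i`, `ȳ_i` (for `1 ≤ i ≤ n`) and `c_j` (for `1 ≤ j ≤ m`). -/
abbrev SatVar (n m : ℕ) := Fin n ⊕ Fin n ⊕ Fin m

def varY {n m : ℕ} (i : Fin n) : SatVar n m := Sum.inl i
def varYbar {n m : ℕ} (i : Fin n) : SatVar n m := Sum.inr (Sum.inl i)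
def varC {n m : ℕ} (j : Fin m) : SatVar n m := Sum.inr (Sum.inr j)

/-- The update incrementing `c_j` for every clause `C_j` containing the literal `(i, b)`. -/
def litUpd {n m : ℕ} (C : Fin m → Fin 3 → Fin n × Bool) (i : Fin n) (b : Bool) :
    SatVar n m → ℕ := fun v =>
  match v with
  | Sum.inr (Sum.inr j) => if ∃ t : Fin 3, C j t = (i, b) then 1 else 0
  | _ => 0

theorem litUpd_le_one {n m : ℕ} (C : Fin m → Fin 3 → Fin n × Bool) (i : Fin n) (b : Bool)
    (v : SatVar n m) : litUpd C i b v ≤ 1 := by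
  rcases v with i' | i' | j
  · simp [litUpd]
  · simp [litUpd]
  · simp only [litUpd]
    split <;> omega

/-- The rules of `TA_φ`. -/
def satRule {n m : ℕ} (C : Fin m → Fin 3 → Fin n × Bool) :
    SatRule n → TRule (SatLoc n) (SatVar n m) Unit
  | Sum.inl i =>
      ⟨satStart i, satTop i, [constGuard false (varYbar i) 1], unitUpd (varY i),
        fun v => unitUpd_le_one _ v⟩
  | Sum.inr (Sum.inl i) =>
      ⟨satStart i, satBot i, [constGuard false (varY i) 1], unitUpd (varYbar i),
        fun v => unitUpd_le_one _ v⟩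
  | Sum.inr (Sum.inr (Sum.inl i)) =>
      ⟨satTop i, satMid, [], litUpd C i true, fun v => litUpd_le_one C i true v⟩
  | Sum.inr (Sum.inr (Sum.inr (Sum.inl i))) =>
      ⟨satBot i, satMid, [], litUpd C i false, fun v => litUpd_le_one C i false v⟩
  | Sum.inr (Sum.inr (Sum.inr (Sum.inr _))) =>
      ⟨satMid, satFin, (List.finRange m).map fun j => constGuard true (varC j) 1,
        fun _ => 0, fun _ => Nat.zero_le 1⟩

/-- The threshold automaton `TA_φ` associated with the 3-CNF formula `φ` given by `C`:
environment with a single parameter `k`, trivial resilience condition and `N(k) = k`;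
initial locations `ℓ₁, …, ℓ_n`. -/
def satTA {n m : ℕ} (hn : 0 < n) (C : Fin m → Fin 3 → Fin n × Bool) :
    TA (SatLoc n) (SatVar n m) Unit (SatRule n) where
  initial := {ℓ | ∃ i : Fin n, ℓ = satStart i}
  initial_nonempty := ⟨satStart ⟨0, hn⟩, ⟨0, hn⟩, rfl⟩
  rc := Set.univ
  N := fun p => p ()
  rule := satRule C


section SatProof

open TA

variable {n m : ℕ}

lemma fall_holds_iff (x : SatVar n m) (g : SatVar n m → ℕ) (p : Unit → ℕ) :
    (constGuard false x 1 : TGuard (SatVar n m) Unit).holds g p ↔ g x = 0 := by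
  simp [constGuard, TGuard.holds, Nat.cast_lt_one]

lemma rise_holds_iff (x : SatVar n m) (g : SatVar n m → ℕ) (p : Unit → ℕ) :
    (constGuard true x 1 : TGuard (SatVar n m) Unit).holds g p ↔ 0 < g x := by
  simp only [constGuard, TGuard.holds, if_true]
  norm_num
  exact Nat.one_le_iff_ne_zero.trans Nat.pos_iff_ne_zero.symm

lemma TA.apply_append' {L V P R : Type} [Fintype P] [DecidableEq L] (ta : TA L V P R)
    (σ : Config L V P) (τ₁ τ₂ : List R) :
    ta.apply σ (τ₁ ++ τ₂) = ta.apply (ta.apply σ τ₁) τ₂ := by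
  induction τ₁ generalizing σ with
  | nil => rfl
  | cons r τ ih => simp [TA.apply, ih]

lemma TA.applicable_append' {L V P R : Type} [Fintype P] [DecidableEq L] (ta : TA L V P R)
    (σ : Config L V P) (τ₁ τ₂ : List R) (h1 : ta.applicable σ τ₁)
    (h2 : ta.applicable (ta.apply σ τ₁) τ₂) : ta.applicable σ (τ₁ ++ τ₂) := by
  induction τ₁ generalizing σ with
  | nil => exact h2
  | cons r τ ih => exact ⟨h1.1, ih _ h1.2 h2⟩

lemma fire_κ_other {L V P : Type} [DecidableEq L] (r : TRule L V P) (σ : Config L V P)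
    {ℓ : L} (hs : ℓ ≠ r.src) (hd : ℓ ≠ r.dst) : (r.fire σ).κ ℓ = σ.κ ℓ := by
  simp [TRule.fire, hs, hd]

lemma fire_κ_le {L V P : Type} [DecidableEq L] (r : TRule L V P) (σ : Config L V P)
    {ℓ : L} (hd : ℓ ≠ r.dst) : (r.fire σ).κ ℓ ≤ σ.κ ℓ := by
  simp only [TRule.fire, hd, if_false]
  omega

lemma fire_g_eq {L V P : Type} [DecidableEq L] (r : TRule L V P) (σ : Config L V P)
    (w : V) : (r.fire σ).g w = σ.g w + r.upd w := rfl

lemma fire_g_le {L V P : Type} [DecidableEq L] (r : TRule L V P) (σ : Config L V P)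
    (w : V) : σ.g w ≤ (r.fire σ).g w := Nat.le_add_right _ _

/-- The pair of rules moving one process from `ℓ_i` to `ℓ_mid` via `⊤_i` or `⊥_i`
according to the assignment `v`. -/
def fwdPair (v : Fin n → Bool) (i : Fin n) : List (SatRule n) :=
  if v i then [Sum.inl i, Sum.inr (Sum.inr (Sum.inl i))]
  else [Sum.inr (Sum.inl i), Sum.inr (Sum.inr (Sum.inr (Sum.inl i)))]

lemma fwd_main (hn : 0 < n) (C : Fin m → Fin 3 → Fin n × Bool) (v : Fin n → Bool) :
    ∀ (s : List (Fin n)) (σ : Config (SatLoc n) (SatVar n m) Unit), s.Nodup →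
    (∀ i ∈ s, 0 < σ.κ (satStart i)) →
    (∀ i ∈ s, σ.g (varY i) = 0 ∧ σ.g (varYbar i) = 0) →
    (satTA hn C).applicable σ (s.flatMap (fwdPair v)) ∧
    ((satTA hn C).apply σ (s.flatMap (fwdPair v))).κ satMid = σ.κ satMid + s.length ∧
    (∀ j, σ.g (varC j) ≤ ((satTA hn C).apply σ (s.flatMap (fwdPair v))).g (varC j)) ∧
    (∀ j, (∃ i ∈ s, ∃ t, C j t = (i, v i)) →
      0 < ((satTA hn C).apply σ (s.flatMap (fwdPair v))).g (varC j)) := by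
  intro s
  induction s with
  | nil => intro σ _ _ _; simp [TA.applicable, TA.apply]
  | cons i s ih =>
    intro σ hnd hκ hg
    have hii : i ∉ s := (List.nodup_cons.mp hnd).1
    have hnd' : s.Nodup := (List.nodup_cons.mp hnd).2
    by_cases hv : v i = true
    · have hpair : fwdPair v i = [Sum.inl i, Sum.inr (Sum.inr (Sum.inl i))] := by
        simp [fwdPair, hv]
      set σ₂ : Config (SatLoc n) (SatVar n m) Unit :=
        ((satRule C (Sum.inr (Sum.inr (Sum.inl i)))).fire
          ((satRule C (Sum.inl i)).fire σ)) with hσ₂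
      have hmid2 : σ₂.κ satMid = σ.κ satMid + 1 := by
        simp [hσ₂, TRule.fire, satRule, satMid, satStart, satTop]
      have hst : ∀ i', i' ≠ i → σ₂.κ (satStart i') = σ.κ (satStart i') := by
        intro i' hne
        simp [hσ₂, TRule.fire, satRule, satStart, satTop, satMid, hne]
      have hg₂ : ∀ w, σ₂.g w = σ.g w + unitUpd (varY i) w + litUpd C i true w :=
        fun w => rfl
      have henA : (satRule C (Sum.inl i)).enabledAt σ := by
        refine ⟨hκ i (by simp), ?_⟩
        intro φ hφ
        simp only [satRule, List.mem_singleton] at hφ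
        subst hφ
        exact (fall_holds_iff _ _ _).mpr (hg i (by simp)).2
      have henB : (satRule C (Sum.inr (Sum.inr (Sum.inl i)))).enabledAt
          ((satRule C (Sum.inl i)).fire σ) := by
        refine ⟨?_, ?_⟩
        · show 0 < _
          simp [TRule.fire, satRule, satStart, satTop]
        · intro φ hφ; simp [satRule] at hφ
      obtain ⟨ha, hmid, hmono, hpos⟩ := ih σ₂ hnd'
        (fun i' hi' => by
          have hne : i' ≠ i := fun h => hii (h ▸ hi')
          rw [hst i' hne]
          exact hκ i' (by simp [hi']))
        (fun i' hi' => by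
          have hne : i' ≠ i := fun h => hii (h ▸ hi')
          obtain ⟨h1, h2⟩ := hg i' (by simp [hi'])
          constructor
          · rw [hg₂, show unitUpd (varY i) (varY i') = 0 from (by simp [unitUpd, varY, hne]),
              show litUpd C i true (varY i') = 0 from rfl, h1]
          · rw [hg₂, show unitUpd (varY i) (varYbar i') = 0 from (by simp [unitUpd, varY, varYbar]),
              show litUpd C i true (varYbar i') = 0 from rfl, h2])
      have happlyeq : (satTA hn C).apply σ ((i :: s).flatMap (fwdPair v))
          = (satTA hn C).apply σ₂ (s.flatMap (fwdPair v)) := by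
        rw [show (i :: s).flatMap (fwdPair v) = fwdPair v i ++ s.flatMap (fwdPair v) from rfl, hpair]; rfl
      refine ⟨?_, ?_, ?_, ?_⟩
      · rw [show (i :: s).flatMap (fwdPair v) = fwdPair v i ++ s.flatMap (fwdPair v) from rfl, hpair]
        exact ⟨henA, henB, ha⟩
      · rw [happlyeq, hmid, hmid2]
        simp; omega
      · intro j
        rw [happlyeq]
        refine le_trans ?_ (hmono j)
        rw [hg₂]; omega
      · intro j hj
        rw [happlyeq]
        obtain ⟨i₀, hi₀, t, ht⟩ := hj
        rcases List.mem_cons.mp hi₀ with h | h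
        · subst h
          refine lt_of_lt_of_le ?_ (hmono j)
          rw [hg₂]
          have hl : litUpd C i₀ true (varC j) = 1 := by
            simp only [litUpd, varC]
            rw [if_pos ⟨t, by rw [ht, hv]⟩]
          omega
        · exact hpos j ⟨i₀, h, t, ht⟩
    · have hv' : v i = false := by simpa using hv
      have hpair : fwdPair v i
          = [Sum.inr (Sum.inl i), Sum.inr (Sum.inr (Sum.inr (Sum.inl i)))] := by
        simp [fwdPair, hv']
      set σ₂ : Config (SatLoc n) (SatVar n m) Unit :=
        ((satRule C (Sum.inr (Sum.inr (Sum.inr (Sum.inl i))))).fire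
          ((satRule C (Sum.inr (Sum.inl i))).fire σ)) with hσ₂
      have hmid2 : σ₂.κ satMid = σ.κ satMid + 1 := by
        simp [hσ₂, TRule.fire, satRule, satMid, satStart, satBot]
      have hst : ∀ i', i' ≠ i → σ₂.κ (satStart i') = σ.κ (satStart i') := by
        intro i' hne
        simp [hσ₂, TRule.fire, satRule, satStart, satBot, satMid, hne]
      have hg₂ : ∀ w, σ₂.g w = σ.g w + unitUpd (varYbar i) w + litUpd C i false w :=
        fun w => rfl
      have henA : (satRule C (Sum.inr (Sum.inl i))).enabledAt σ := by
        refine ⟨hκ i (by simp), ?_⟩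
        intro φ hφ
        simp only [satRule, List.mem_singleton] at hφ
        subst hφ
        exact (fall_holds_iff _ _ _).mpr (hg i (by simp)).1
      have henB : (satRule C (Sum.inr (Sum.inr (Sum.inr (Sum.inl i))))).enabledAt
          ((satRule C (Sum.inr (Sum.inl i))).fire σ) := by
        refine ⟨?_, ?_⟩
        · show 0 < _
          simp [TRule.fire, satRule, satStart, satBot]
        · intro φ hφ; simp [satRule] at hφ
      obtain ⟨ha, hmid, hmono, hpos⟩ := ih σ₂ hnd'
        (fun i' hi' => by
          have hne : i' ≠ i := fun h => hii (h ▸ hi')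
          rw [hst i' hne]
          exact hκ i' (by simp [hi']))
        (fun i' hi' => by
          have hne : i' ≠ i := fun h => hii (h ▸ hi')
          obtain ⟨h1, h2⟩ := hg i' (by simp [hi'])
          constructor
          · rw [hg₂, show unitUpd (varYbar i) (varY i') = 0 from (by simp [unitUpd, varY, varYbar]),
              show litUpd C i false (varY i') = 0 from rfl, h1]
          · rw [hg₂, show unitUpd (varYbar i) (varYbar i') = 0 from (by simp [unitUpd, varYbar, hne]),
              show litUpd C i false (varYbar i') = 0 from rfl, h2])
      have happlyeq : (satTA hn C).apply σ ((i :: s).flatMap (fwdPair v))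
          = (satTA hn C).apply σ₂ (s.flatMap (fwdPair v)) := by
        rw [show (i :: s).flatMap (fwdPair v) = fwdPair v i ++ s.flatMap (fwdPair v) from rfl, hpair]; rfl
      refine ⟨?_, ?_, ?_, ?_⟩
      · rw [show (i :: s).flatMap (fwdPair v) = fwdPair v i ++ s.flatMap (fwdPair v) from rfl, hpair]
        exact ⟨henA, henB, ha⟩
      · rw [happlyeq, hmid, hmid2]
        simp; omega
      · intro j
        rw [happlyeq]
        refine le_trans ?_ (hmono j)
        rw [hg₂]; omega
      · intro j hj
        rw [happlyeq]
        obtain ⟨i₀, hi₀, t, ht⟩ := hj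
        rcases List.mem_cons.mp hi₀ with h | h
        · subst h
          refine lt_of_lt_of_le ?_ (hmono j)
          rw [hg₂]
          have hl : litUpd C i₀ false (varC j) = 1 := by
            simp only [litUpd, varC]
            rw [if_pos ⟨t, by rw [ht, hv']⟩]
          omega
        · exact hpos j ⟨i₀, h, t, ht⟩

/-- The invariant maintained along any run of `TA_φ`. -/
def SatInv (C : Fin m → Fin 3 → Fin n × Bool)
    (σ : Config (SatLoc n) (SatVar n m) Unit) : Prop :=
  (∀ i, 0 < σ.κ (satTop i) → 0 < σ.g (varY i)) ∧
  (∀ i, 0 < σ.κ (satBot i) → 0 < σ.g (varYbar i)) ∧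
  (∀ i, ¬(0 < σ.g (varY i) ∧ 0 < σ.g (varYbar i))) ∧
  (∀ j, 0 < σ.g (varC j) → ∃ t, if (C j t).2 then 0 < σ.g (varY (C j t).1)
    else 0 < σ.g (varYbar (C j t).1))

lemma satInv4_mono {C : Fin m → Fin 3 → Fin n × Bool}
    {σ σ' : Config (SatLoc n) (SatVar n m) Unit}
    (hmono : ∀ w, σ.g w ≤ σ'.g w) {j : Fin m}
    (h : ∃ t, if (C j t).2 then 0 < σ.g (varY (C j t).1)
      else 0 < σ.g (varYbar (C j t).1)) :
    ∃ t, if (C j t).2 then 0 < σ'.g (varY (C j t).1)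
      else 0 < σ'.g (varYbar (C j t).1) := by
  obtain ⟨t, ht⟩ := h
  refine ⟨t, ?_⟩
  cases hb : (C j t).2 <;> simp [hb] at ht ⊢ <;>
    exact lt_of_lt_of_le ht (hmono _)

lemma satInv_step (C : Fin m → Fin 3 → Fin n × Bool)
    (σ : Config (SatLoc n) (SatVar n m) Unit) (r : SatRule n)
    (hinv : SatInv C σ) (hen : (satRule C r).enabledAt σ) :
    SatInv C ((satRule C r).fire σ) := by
  obtain ⟨h1, h2, h3, h4⟩ := hinv
  have hmono : ∀ w, σ.g w ≤ ((satRule C r).fire σ).g w := fire_g_le _ _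
  rcases r with i | i | i | i | u
  · -- ℓ_i → ⊤_i
    have hbar : σ.g (varYbar i) = 0 :=
      (fall_holds_iff _ _ _).mp (hen.2 _ (by simp [satRule]))
    refine ⟨?_, ?_, ?_, ?_⟩
    · intro i' hi'
      by_cases h : i' = i
      · subst h
        rw [fire_g_eq]
        have : (satRule C (Sum.inl i')).upd (varY i') = 1 := by
          simp [satRule, unitUpd]
        omega
      · rw [fire_κ_other _ _ (by simp [satRule, satStart, satTop, satBot, satMid, satFin, satTop, satStart])
          (by simp [satRule, satStart, satTop, satBot, satMid, satFin, satTop, h])] at hi'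
        exact lt_of_lt_of_le (h1 i' hi') (hmono _)
    · intro i' hi'
      rw [fire_κ_other _ _ (by simp [satRule, satStart, satTop, satBot, satMid, satFin, satBot, satStart])
        (by simp [satRule, satStart, satTop, satBot, satMid, satFin, satBot, satTop])] at hi'
      exact lt_of_lt_of_le (h2 i' hi') (hmono _)
    · intro i'
      by_cases h : i' = i
      · subst h
        rw [fire_g_eq, fire_g_eq]
        have hu : (satRule C (Sum.inl i')).upd (varYbar i') = 0 := by
          simp [satRule, unitUpd, varY, varYbar]
        rw [hu, hbar]
        omega
      · have e1 : (satRule C (Sum.inl i)).upd (varY i') = 0 := by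
          simp [satRule, unitUpd, varY, h]
        have e2 : (satRule C (Sum.inl i)).upd (varYbar i') = 0 := by
          simp [satRule, unitUpd, varY, varYbar]
        rw [fire_g_eq, fire_g_eq, e1, e2, add_zero, add_zero]
        exact h3 i'
    · intro j hj
      have ec : (satRule C (Sum.inl i)).upd (varC j) = 0 := by
        simp [satRule, unitUpd, varC, varY]
      rw [fire_g_eq, ec, add_zero] at hj
      exact satInv4_mono hmono (h4 j hj)
  · -- ℓ_i → ⊥_i
    have hy : σ.g (varY i) = 0 :=
      (fall_holds_iff _ _ _).mp (hen.2 _ (by simp [satRule]))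
    refine ⟨?_, ?_, ?_, ?_⟩
    · intro i' hi'
      rw [fire_κ_other _ _ (by simp [satRule, satStart, satTop, satBot, satMid, satFin, satTop, satStart])
        (by simp [satRule, satStart, satTop, satBot, satMid, satFin, satTop, satBot])] at hi'
      exact lt_of_lt_of_le (h1 i' hi') (hmono _)
    · intro i' hi'
      by_cases h : i' = i
      · subst h
        rw [fire_g_eq]
        have : (satRule C (Sum.inr (Sum.inl i'))).upd (varYbar i') = 1 := by
          simp [satRule, unitUpd]
        omega
      · rw [fire_κ_other _ _ (by simp [satRule, satStart, satTop, satBot, satMid, satFin, satBot, satStart])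
          (by simp [satRule, satStart, satTop, satBot, satMid, satFin, satBot, h])] at hi'
        exact lt_of_lt_of_le (h2 i' hi') (hmono _)
    · intro i'
      by_cases h : i' = i
      · subst h
        rw [fire_g_eq, fire_g_eq]
        have hu : (satRule C (Sum.inr (Sum.inl i'))).upd (varY i') = 0 := by
          simp [satRule, unitUpd, varY, varYbar]
        rw [hu, hy]
        omega
      · have e1 : (satRule C (Sum.inr (Sum.inl i))).upd (varY i') = 0 := by
          simp [satRule, unitUpd, varY, varYbar]
        have e2 : (satRule C (Sum.inr (Sum.inl i))).upd (varYbar i') = 0 := by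
          simp [satRule, unitUpd, varYbar, h]
        rw [fire_g_eq, fire_g_eq, e1, e2, add_zero, add_zero]
        exact h3 i'
    · intro j hj
      have ec : (satRule C (Sum.inr (Sum.inl i))).upd (varC j) = 0 := by
        simp [satRule, unitUpd, varC, varYbar]
      rw [fire_g_eq, ec, add_zero] at hj
      exact satInv4_mono hmono (h4 j hj)
  · -- ⊤_i → ℓ_mid
    have hyi : 0 < σ.g (varY i) := h1 i hen.1
    have hgy : ∀ i', ((satRule C (Sum.inr (Sum.inr (Sum.inl i)))).fire σ).g (varY i')
        = σ.g (varY i') := by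
      intro i'; rw [fire_g_eq]; simp [satRule, litUpd, varY]
    have hgyb : ∀ i', ((satRule C (Sum.inr (Sum.inr (Sum.inl i)))).fire σ).g (varYbar i')
        = σ.g (varYbar i') := by
      intro i'; rw [fire_g_eq]; simp [satRule, litUpd, varYbar]
    refine ⟨?_, ?_, ?_, ?_⟩
    · intro i' hi'
      rw [hgy]
      refine h1 i' (lt_of_lt_of_le hi' (fire_κ_le _ _ ?_))
      simp [satRule, satStart, satTop, satBot, satMid, satFin, satTop, satMid]
    · intro i' hi'
      rw [hgyb]
      refine h2 i' (lt_of_lt_of_le hi' (fire_κ_le _ _ ?_))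
      simp [satRule, satStart, satTop, satBot, satMid, satFin, satBot, satMid]
    · intro i'
      rw [hgy, hgyb]
      exact h3 i'
    · intro j hj
      by_cases hex : ∃ t : Fin 3, C j t = (i, true)
      · obtain ⟨t, ht⟩ := hex
        refine ⟨t, ?_⟩
        rw [ht]
        simp only [ite_true]
        rw [hgy]
        exact hyi
      · have ec : (satRule C (Sum.inr (Sum.inr (Sum.inl i)))).upd (varC j) = 0 := by
          simp [satRule, litUpd, varC, hex]
        rw [fire_g_eq, ec, add_zero] at hj
        exact satInv4_mono hmono (h4 j hj)
  · -- ⊥_i → ℓ_mid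
    have hyi : 0 < σ.g (varYbar i) := h2 i hen.1
    have hgy : ∀ i', ((satRule C (Sum.inr (Sum.inr (Sum.inr (Sum.inl i))))).fire σ).g (varY i')
        = σ.g (varY i') := by
      intro i'; rw [fire_g_eq]; simp [satRule, litUpd, varY]
    have hgyb : ∀ i', ((satRule C (Sum.inr (Sum.inr (Sum.inr (Sum.inl i))))).fire σ).g (varYbar i')
        = σ.g (varYbar i') := by
      intro i'; rw [fire_g_eq]; simp [satRule, litUpd, varYbar]
    refine ⟨?_, ?_, ?_, ?_⟩
    · intro i' hi'
      rw [hgy]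
      refine h1 i' (lt_of_lt_of_le hi' (fire_κ_le _ _ ?_))
      simp [satRule, satStart, satTop, satBot, satMid, satFin, satTop, satMid]
    · intro i' hi'
      rw [hgyb]
      refine h2 i' (lt_of_lt_of_le hi' (fire_κ_le _ _ ?_))
      simp [satRule, satStart, satTop, satBot, satMid, satFin, satBot, satMid]
    · intro i'
      rw [hgy, hgyb]
      exact h3 i'
    · intro j hj
      by_cases hex : ∃ t : Fin 3, C j t = (i, false)
      · obtain ⟨t, ht⟩ := hex
        refine ⟨t, ?_⟩
        rw [ht]
        simp only [ite_false]
        rw [hgyb]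
        exact hyi
      · have ec : (satRule C (Sum.inr (Sum.inr (Sum.inr (Sum.inl i))))).upd (varC j) = 0 := by
          simp [satRule, litUpd, varC, hex]
        rw [fire_g_eq, ec, add_zero] at hj
        exact satInv4_mono hmono (h4 j hj)
  · -- ℓ_mid → ℓ_F
    have hgeq : ∀ w, ((satRule C (Sum.inr (Sum.inr (Sum.inr (Sum.inr u))))).fire σ).g w
        = σ.g w := by
      intro w; rw [fire_g_eq]; simp [satRule]
    refine ⟨?_, ?_, ?_, ?_⟩
    · intro i' hi'
      rw [hgeq]
      refine h1 i' ?_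
      rwa [fire_κ_other _ _ (by simp [satRule, satStart, satTop, satBot, satMid, satFin, satTop, satMid]) (by simp [satRule, satStart, satTop, satBot, satMid, satFin, satTop, satFin])] at hi'
    · intro i' hi'
      rw [hgeq]
      refine h2 i' ?_
      rwa [fire_κ_other _ _ (by simp [satRule, satStart, satTop, satBot, satMid, satFin, satBot, satMid]) (by simp [satRule, satStart, satTop, satBot, satMid, satFin, satBot, satFin])] at hi'
    · intro i'
      rw [hgeq, hgeq]
      exact h3 i'
    · intro j hj
      rw [hgeq] at hj
      obtain ⟨t, ht⟩ := h4 j hj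
      refine ⟨t, ?_⟩
      cases hb : (C j t).2 <;> simp [hb] at ht ⊢ <;> rw [hgeq] <;> exact ht

lemma satInv_extract (C : Fin m → Fin 3 → Fin n × Bool)
    (σ : Config (SatLoc n) (SatVar n m) Unit) (hinv : SatInv C σ)
    (hc : ∀ j, 0 < σ.g (varC j)) : cnfSatisfiable C := by
  refine ⟨fun i => decide (0 < σ.g (varY i)), fun j => ?_⟩
  obtain ⟨t, ht⟩ := hinv.2.2.2 j (hc j)
  refine ⟨t, ?_⟩
  cases hb : (C j t).2 <;> simp [hb] at ht ⊢
  · exact Nat.eq_zero_of_not_pos fun hpos => (hinv.2.2.1 (C j t).1) ⟨hpos, ht⟩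
  · exact ht

lemma bwd_main (hn : 0 < n) (C : Fin m → Fin 3 → Fin n × Bool) :
    ∀ (τ : List (SatRule n)) (σ : Config (SatLoc n) (SatVar n m) Unit),
    SatInv C σ → σ.κ satFin = 0 → (satTA hn C).applicable σ τ →
    0 < ((satTA hn C).apply σ τ).κ satFin → cnfSatisfiable C := by
  intro τ
  induction τ with
  | nil =>
    intro σ _ h0 _ hF
    simp only [TA.apply] at hF
    omega
  | cons r τ ih =>
    intro σ hinv h0 happ hF
    obtain ⟨hen, happ'⟩ := happ
    have hen' : (satRule C r).enabledAt σ := hen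
    have hF' : 0 < ((satTA hn C).apply ((satRule C r).fire σ) τ).κ satFin := hF
    have hinv' := satInv_step C σ r hinv hen'
    rcases r with i | i | i | i | u
    · refine ih _ hinv' ?_ happ' hF'
      rw [fire_κ_other _ _ (by simp [satRule, satStart, satTop, satBot, satMid, satFin, satFin, satStart]) (by simp [satRule, satStart, satTop, satBot, satMid, satFin, satFin, satTop]), h0]
    · refine ih _ hinv' ?_ happ' hF'
      rw [fire_κ_other _ _ (by simp [satRule, satStart, satTop, satBot, satMid, satFin, satFin, satStart]) (by simp [satRule, satStart, satTop, satBot, satMid, satFin, satFin, satBot]), h0]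
    · refine ih _ hinv' ?_ happ' hF'
      rw [fire_κ_other _ _ (by simp [satRule, satStart, satTop, satBot, satMid, satFin, satFin, satTop]) ?_, h0]
      simp [satRule, satStart, satTop, satBot, satMid, satFin, satFin, satMid]
    · refine ih _ hinv' ?_ happ' hF'
      rw [fire_κ_other _ _ (by simp [satRule, satStart, satTop, satBot, satMid, satFin, satFin, satBot]) ?_, h0]
      simp [satRule, satStart, satTop, satBot, satMid, satFin, satFin, satMid]
    · -- the final rule fired: all the clause counters are positive
      refine satInv_extract C σ hinv fun j => ?_
      have hφ := hen'.2 (constGuard true (varC j) 1) ?_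
      · exact (rise_holds_iff _ _ _).mp hφ
      · show _ ∈ (List.finRange m).map _
        exact List.mem_map.mpr ⟨j, List.mem_finRange j, rfl⟩

end SatProof

/-- A 3-CNF formula `φ` is satisfiable if and only if there are an initial configuration
`σ₀` of `TA_φ` and a schedule `τ` applicable to `σ₀` such that `τ(σ₀)` covers `ℓ_F`. -/
theorem cnf_satisfiable_iff_coverable {n m : ℕ} (hn : 0 < n)
    (C : Fin m → Fin 3 → Fin n × Bool) :
    cnfSatisfiable C ↔
    ∃ (σ₀ : Config (SatLoc n) (SatVar n m) Unit) (τ : List (SatRule n)),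
      (satTA hn C).isInitial σ₀ ∧ (satTA hn C).applicable σ₀ τ ∧
      0 < ((satTA hn C).apply σ₀ τ).κ satFin := by
  constructor
  · rintro ⟨v, hv⟩
    set σ₀ : Config (SatLoc n) (SatVar n m) Unit :=
      ⟨Sum.elim (fun _ => 1) (fun _ => 0), fun _ => 0, fun _ => n⟩ with hσ₀
    obtain ⟨ha, hmid, hmono, hpos⟩ := fwd_main hn C v (List.finRange n) σ₀
      (List.nodup_finRange n)
      (fun i _ => by simp [hσ₀, satStart])
      (fun i _ => ⟨rfl, rfl⟩)
    set σ' := (satTA hn C).apply σ₀ ((List.finRange n).flatMap (fwdPair v)) with hσ'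
    have hmidpos : 0 < σ'.κ satMid := by
      rw [hmid]
      simp [hσ₀, satMid]
      omega
    have hcs : ∀ j, 0 < σ'.g (varC j) := by
      intro j
      obtain ⟨t, htv⟩ := hv j
      exact hpos j ⟨(C j t).1, List.mem_finRange _, t, by rw [htv]⟩
    have henF : (satRule C (Sum.inr (Sum.inr (Sum.inr (Sum.inr ()))))).enabledAt σ' := by
      refine ⟨hmidpos, ?_⟩
      intro φ hφ
      have : φ ∈ (List.finRange m).map fun j => constGuard true (varC j) 1 := hφ
      obtain ⟨j, _, rfl⟩ := List.mem_map.mp this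
      exact (rise_holds_iff _ _ _).mpr (hcs j)
    refine ⟨σ₀, (List.finRange n).flatMap (fwdPair v)
      ++ [Sum.inr (Sum.inr (Sum.inr (Sum.inr ())))], ?_, ?_, ?_⟩
    · refine ⟨⟨Set.mem_univ _, ?_⟩, ?_, fun _ => rfl⟩
      · simp [hσ₀, satTA, Fintype.sum_sum_type]
      · intro ℓ hℓ
        rcases ℓ with i | w
        · exact absurd ⟨i, rfl⟩ hℓ
        · rfl
    · refine TA.applicable_append' _ _ _ _ ha ?_
      exact ⟨henF, trivial⟩
    · rw [TA.apply_append']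
      have hfin : ((satTA hn C).apply σ' [Sum.inr (Sum.inr (Sum.inr (Sum.inr ())))]).κ satFin
          = σ'.κ satFin + 1 := by
        show ((satRule C (Sum.inr (Sum.inr (Sum.inr (Sum.inr ()))))).fire σ').κ satFin
          = σ'.κ satFin + 1
        simp [TRule.fire, satRule, satFin, satMid]
      rw [← hσ', hfin]
      omega
  · rintro ⟨σ₀, τ, hinit, happ, hF⟩
    have hg0 := hinit.2.2
    have hκ0 : ∀ ℓ, (¬ ∃ i : Fin n, ℓ = satStart i) → σ₀.κ ℓ = 0 := fun ℓ h =>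
      hinit.2.1 ℓ h
    have hinv : SatInv C σ₀ := by
      refine ⟨?_, ?_, ?_, ?_⟩
      · intro i hi
        rw [hκ0 (satTop i) (by simp [satRule, satStart, satTop, satBot, satMid, satFin, satTop, satStart])] at hi
        omega
      · intro i hi
        rw [hκ0 (satBot i) (by simp [satRule, satStart, satTop, satBot, satMid, satFin, satBot, satStart])] at hi
        omega
      · intro i
        rw [hg0, hg0]
        omega
      · intro j hj
        rw [hg0] at hj
        omega
    exact bwd_main hn C τ σ₀ hinv (hκ0 satFin (by simp [satRule, satStart, satTop, satBot, satMid, satFin, satFin, satStart])) happ hF
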